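/- arXiv:2406.01581 — 5 statements merged into one kernel-verified Lean document; each statement's English description precedes it below -/
import Mathlib

section
/- For any β > 1 and any s ∈ ℝ, the Gaussian tail satisfies ∫_s^∞ (1/√(2π)) e^{-t²/2} dt ≥ (√(2e(β-1)) / (2β√π)) · e^{-β s²/2}. -/
open MeasureTheory Real Filter Set Topology

noncomputable def gpdf (t : ℝ) : ℝ := (1 / Real.sqrt (2 * Real.pi)) * Real.exp (-t ^ 2 / 2)

lemma gpdf_cont : Continuous gpdf := by
  unfold gpdf; continuity

lemma gpdf_pos (t : ℝ) : 0 < gpdf t := by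
  unfold gpdf
  have : 0 < Real.sqrt (2 * Real.pi) := Real.sqrt_pos.2 (by positivity)
  positivity

lemma gpdf_integrable : Integrable gpdf := by
  have h : Integrable (fun t : ℝ => Real.exp (-(1/2 : ℝ) * t ^ 2)) :=
    integrable_exp_neg_mul_sq (by norm_num)
  have h2 := h.const_mul (1 / Real.sqrt (2 * Real.pi))
  refine h2.congr ?_
  filter_upwards with t
  unfold gpdf
  ring_nf

noncomputable def gtail (s : ℝ) : ℝ := ∫ t in Set.Ioi s, gpdf t

lemma gtail_eq (u : ℝ) : gtail u = gtail 0 - ∫ t in (0:ℝ)..u, gpdf t := by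
  have h1 : ∀ v : ℝ, gtail v = (∫ t, gpdf t) - ∫ t in Set.Iic v, gpdf t := by
    intro v
    have := MeasureTheory.integral_add_compl (measurableSet_Iic (a := v)) gpdf_integrable
    rw [Set.compl_Iic] at this
    unfold gtail
    rw [eq_sub_iff_add_eq, add_comm]
    exact this
  have h2 : (∫ t in Set.Iic u, gpdf t) - (∫ t in Set.Iic (0:ℝ), gpdf t) = ∫ t in (0:ℝ)..u, gpdf t :=
    intervalIntegral.integral_Iic_sub_Iic gpdf_integrable.integrableOn gpdf_integrable.integrableOn
  rw [h1 u, h1 0, ← h2]; ring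

lemma gtail_hasDeriv (u : ℝ) : HasDerivAt gtail (-gpdf u) u := by
  have hint : HasDerivAt (fun v => ∫ t in (0:ℝ)..v, gpdf t) (gpdf u) u :=
    intervalIntegral.integral_hasDerivAt_right
      (gpdf_integrable.intervalIntegrable)
      (gpdf_cont.stronglyMeasurableAtFilter _ _)
      gpdf_cont.continuousAt
  have h : HasDerivAt (fun v => gtail 0 - ∫ t in (0:ℝ)..v, gpdf t) (-gpdf u) u := by
    simpa using hint.const_sub (gtail 0)
  exact h.congr_of_eventuallyEq (Filter.Eventually.of_forall fun v => (gtail_eq v))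

lemma gtail_tendsto : Tendsto gtail atTop (𝓝 0) := by
  have h1 : Tendsto (fun u => ∫ t in (0:ℝ)..u, gpdf t) atTop (𝓝 (∫ t in Set.Ioi (0:ℝ), gpdf t)) :=
    intervalIntegral_tendsto_integral_Ioi 0 gpdf_integrable.integrableOn tendsto_id
  have h2 : Tendsto (fun u => gtail 0 - ∫ t in (0:ℝ)..u, gpdf t) atTop (𝓝 (gtail 0 - gtail 0)) :=
    (tendsto_const_nhds).sub h1
  rw [sub_self] at h2
  exact h2.congr (fun u => (gtail_eq u).symm)

/-- Lower bound on the standard Gaussian tail probability (Chang et al. 2011). -/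
theorem stmt1 (β s : ℝ) (hβ : 1 < β) :
    Real.sqrt (2 * Real.exp 1 * (β - 1)) / (2 * β * Real.sqrt Real.pi) *
        Real.exp (-β * s ^ 2 / 2) ≤
      ∫ t in Set.Ioi s, (1 / Real.sqrt (2 * Real.pi)) * Real.exp (-t ^ 2 / 2) := by
  have hβ0 : (0:ℝ) < β := lt_trans one_pos hβ
  have hK0 : 0 ≤ Real.sqrt (2 * Real.exp 1 * (β - 1)) / (2 * β * Real.sqrt Real.pi) := by
    apply div_nonneg (Real.sqrt_nonneg _)
    have : 0 < Real.sqrt Real.pi := Real.sqrt_pos.2 Real.pi_pos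
    positivity
  set K : ℝ := Real.sqrt (2 * Real.exp 1 * (β - 1)) / (2 * β * Real.sqrt Real.pi) with hKdef
  have hgoal : K * Real.exp (-β * s ^ 2 / 2) ≤ gtail s := by
    set h : ℝ → ℝ := fun u => gtail u - K * Real.exp (-β * u ^ 2 / 2) with hh
    have hderiv : ∀ u : ℝ, HasDerivAt h (-gpdf u + K * (β * u) * Real.exp (-β * u ^ 2 / 2)) u := by
      intro u
      have hGd : HasDerivAt (fun v : ℝ => K * Real.exp (-β * v ^ 2 / 2))
          (K * (Real.exp (-β * u ^ 2 / 2) * (-β * u))) u := by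
        have hinner : HasDerivAt (fun v : ℝ => -β * v ^ 2 / 2) (-β * u) u := by
          have := ((hasDerivAt_pow 2 u).const_mul (-β)).div_const 2
          refine this.congr_deriv ?_
          simp; ring
        exact (hinner.exp).const_mul K
      have := (gtail_hasDeriv u).sub hGd
      refine this.congr_deriv ?_
      ring
    have hkey : ∀ u : ℝ, -gpdf u + K * (β * u) * Real.exp (-β * u ^ 2 / 2) ≤ 0 := by
      intro u
      have hfpos := gpdf_pos u
      rcases le_or_gt u 0 with hu | hu
      · have : K * (β * u) * Real.exp (-β * u ^ 2 / 2) ≤ 0 := by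
          apply mul_nonpos_of_nonpos_of_nonneg _ (Real.exp_nonneg _)
          exact mul_nonpos_of_nonneg_of_nonpos hK0 (by nlinarith)
        linarith
      · have hsqrtpi : (0:ℝ) < Real.sqrt Real.pi := Real.sqrt_pos.2 Real.pi_pos
        have hsqrt2pi : (0:ℝ) < Real.sqrt (2 * Real.pi) := Real.sqrt_pos.2 (by positivity)
        have hKβ : K * β = Real.sqrt (Real.exp 1 * (β - 1)) / Real.sqrt (2 * Real.pi) := by
          have h2 : (0:ℝ) < Real.sqrt 2 := Real.sqrt_pos.2 (by norm_num)
          have hs2 : Real.sqrt 2 * Real.sqrt 2 = 2 := Real.mul_self_sqrt (by norm_num)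
          have e1 : Real.sqrt (2 * Real.exp 1 * (β - 1))
              = Real.sqrt 2 * Real.sqrt (Real.exp 1 * (β - 1)) := by
            rw [mul_assoc, Real.sqrt_mul (by norm_num)]
          have e2 : Real.sqrt (2 * Real.pi) = Real.sqrt 2 * Real.sqrt Real.pi :=
            Real.sqrt_mul (by norm_num) _
          rw [hKdef, e1, e2, div_mul_eq_mul_div,
            div_eq_div_iff (by positivity) (by positivity)]
          linear_combination (Real.sqrt (Real.exp 1 * (β - 1)) * β * Real.sqrt Real.pi) * hs2
        have hmain : Real.sqrt (Real.exp 1 * (β - 1)) * u * Real.exp (-β * u ^ 2 / 2)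
            ≤ Real.exp (-u ^ 2 / 2) := by
          rw [show -β * u ^ 2 / 2 = -u ^ 2 / 2 + (-((β - 1) * u ^ 2 / 2)) by ring, Real.exp_add]
          rw [show Real.sqrt (Real.exp 1 * (β - 1)) * u *
                (Real.exp (-u ^ 2 / 2) * Real.exp (-((β - 1) * u ^ 2 / 2)))
              = (Real.sqrt (Real.exp 1 * (β - 1)) * u * Real.exp (-((β - 1) * u ^ 2 / 2))) *
                Real.exp (-u ^ 2 / 2) by ring]
          have hexp : Real.sqrt (Real.exp 1 * (β - 1)) * u * Real.exp (-((β - 1) * u ^ 2 / 2)) ≤ 1 := by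
            rw [Real.exp_neg, mul_inv_le_iff₀ (Real.exp_pos _), one_mul]
            have h1 : Real.sqrt (Real.exp 1 * (β - 1)) * u
                = Real.sqrt (Real.exp 1 * ((β - 1) * u ^ 2)) := by
              rw [show Real.exp 1 * ((β - 1) * u ^ 2) = (Real.exp 1 * (β - 1)) * u ^ 2 by ring,
                Real.sqrt_mul (show (0:ℝ) ≤ Real.exp 1 * (β - 1) from mul_nonneg (Real.exp_pos 1).le (by linarith)) (u ^ 2),
                Real.sqrt_sq hu.le]
            rw [h1]
            have h2 : Real.exp 1 * ((β - 1) * u ^ 2) ≤ (Real.exp ((β - 1) * u ^ 2 / 2)) ^ 2 := by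
              have hX : (β - 1) * u ^ 2 ≤ Real.exp ((β - 1) * u ^ 2 - 1) :=
                le_trans (by linarith) (Real.add_one_le_exp _)
              have hmul : Real.exp ((β - 1) * u ^ 2 - 1) * Real.exp 1
                  = Real.exp ((β - 1) * u ^ 2) := by
                rw [← Real.exp_add]; ring_nf
              have hsq : (Real.exp ((β - 1) * u ^ 2 / 2)) ^ 2 = Real.exp ((β - 1) * u ^ 2) := by
                rw [← Real.exp_nat_mul]; norm_num; ring_nf
              rw [hsq]
              calc Real.exp 1 * ((β - 1) * u ^ 2)
                  ≤ Real.exp 1 * Real.exp ((β - 1) * u ^ 2 - 1) :=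
                    mul_le_mul_of_nonneg_left hX (Real.exp_nonneg 1)
                _ = Real.exp ((β - 1) * u ^ 2) := (mul_comm _ _).trans hmul
            calc Real.sqrt (Real.exp 1 * ((β - 1) * u ^ 2))
                ≤ Real.sqrt ((Real.exp ((β - 1) * u ^ 2 / 2)) ^ 2) := Real.sqrt_le_sqrt h2
              _ = Real.exp ((β - 1) * u ^ 2 / 2) := Real.sqrt_sq (Real.exp_nonneg _)
          calc Real.sqrt (Real.exp 1 * (β - 1)) * u * Real.exp (-((β - 1) * u ^ 2 / 2)) *
                Real.exp (-u ^ 2 / 2)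
              ≤ 1 * Real.exp (-u ^ 2 / 2) :=
                mul_le_mul_of_nonneg_right hexp (Real.exp_nonneg _)
            _ = Real.exp (-u ^ 2 / 2) := one_mul _
        have heq : K * (β * u) * Real.exp (-β * u ^ 2 / 2)
            = (1 / Real.sqrt (2 * Real.pi)) *
              (Real.sqrt (Real.exp 1 * (β - 1)) * u * Real.exp (-β * u ^ 2 / 2)) := by
          rw [show K * (β * u) = (K * β) * u by ring, hKβ]
          field_simp
          try ring
        have h2pi : (0:ℝ) < 1 / Real.sqrt (2 * Real.pi) := by positivity
        have := mul_le_mul_of_nonneg_left hmain h2pi.le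
        rw [heq]
        unfold gpdf
        linarith
    have hanti : Antitone h := by
      apply antitone_of_deriv_nonpos
      · intro u; exact (hderiv u).differentiableAt
      · intro u; rw [(hderiv u).deriv]; exact hkey u
    have hlim : Tendsto h atTop (𝓝 0) := by
      have hGlim : Tendsto (fun u : ℝ => K * Real.exp (-β * u ^ 2 / 2)) atTop (𝓝 (K * 0)) := by
        apply Tendsto.const_mul
        apply Real.tendsto_exp_atBot.comp
        have hsq : Tendsto (fun u : ℝ => u ^ 2) atTop atTop := tendsto_pow_atTop two_ne_zero
        have hb := hsq.const_mul_atTop (show (0:ℝ) < β / 2 by positivity)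
        apply (tendsto_neg_atBot_iff.2 hb).congr
        intro u; ring
      rw [mul_zero] at hGlim
      have := gtail_tendsto.sub hGlim
      rw [sub_zero] at this
      exact this
    have h0 : 0 ≤ h s := le_of_tendsto hlim (Filter.eventually_atTop.2 ⟨s, fun x hx => hanti hx⟩)
    rw [hh] at h0
    linarith [h0]
  have : gtail s = ∫ t in Set.Ioi s, (1 / Real.sqrt (2 * Real.pi)) * Real.exp (-t ^ 2 / 2) := rfl
  linarith [hgoal, this.ge, this.le]
end

section
/- Let g : ℝ → ℝ be a polynomial with E_{t∼N(0,1)}[g(t)²] = 1 and let τ = max_{-2≤t≤2} |g(t)|. Then for every even integer i ≥ 1, E_{t∼N(0,1)}[(g(t)/(2τ))^i · (t² - 1)] ≥ 3·P_{t∼N(0,1)}[|g(t)| ≥ 2τ] − 2^{-i}. -/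
open MeasureTheory

/-- Standard Gaussian measure on ℝ. -/
noncomputable def stdGauss : Measure ℝ := ProbabilityTheory.gaussianReal 0 1

/-- Normalized probabilists' Hermite polynomial `He n`. -/
noncomputable def He (n : ℕ) (t : ℝ) : ℝ :=
  (Polynomial.aeval t (Polynomial.hermite n)) / Real.sqrt (n.factorial)

/-- `k`-th normalized Hermite coefficient of `f` w.r.t. the standard Gaussian. -/
noncomputable def Hc (f : ℝ → ℝ) (k : ℕ) : ℝ := ∫ t, f t * He k t ∂stdGauss

lemma integrable_pow_exp (n : ℕ) :
    Integrable (fun x : ℝ => x ^ n * Real.exp (-(1/2 : ℝ) * x ^ 2)) := by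
  have := integrable_rpow_mul_exp_neg_mul_sq (b := (1/2 : ℝ)) (by norm_num) (s := (n : ℝ))
    (by exact neg_one_lt_zero.trans_le (Nat.cast_nonneg n))
  simpa [Real.rpow_natCast] using this

lemma integrable_poly_stdGauss (p : Polynomial ℝ) :
    Integrable (fun t => p.eval t) stdGauss := by
  rw [stdGauss, ProbabilityTheory.gaussianReal_of_var_ne_zero 0 one_ne_zero]
  rw [integrable_withDensity_iff (ProbabilityTheory.measurable_gaussianPDF 0 1)
    (Filter.Eventually.of_forall fun x => ENNReal.ofReal_lt_top)]
  have hpdf : ∀ x : ℝ, (ProbabilityTheory.gaussianPDF 0 1 x).toReal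
      = (Real.sqrt (2 * Real.pi))⁻¹ * Real.exp (-(1/2 : ℝ) * x ^ 2) := by
    intro x
    rw [ProbabilityTheory.gaussianPDF, ENNReal.toReal_ofReal
      (ProbabilityTheory.gaussianPDFReal_nonneg _ _ _)]
    simp only [ProbabilityTheory.gaussianPDFReal, NNReal.coe_one, mul_one, sub_zero]
    congr 1
    ring
  simp_rw [hpdf]
  have : ∀ x : ℝ, p.eval x * ((Real.sqrt (2 * Real.pi))⁻¹ * Real.exp (-(1/2 : ℝ) * x ^ 2))
      = (Real.sqrt (2 * Real.pi))⁻¹ * (p.eval x * Real.exp (-(1/2 : ℝ) * x ^ 2)) := fun x => by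
    ring
  simp_rw [this]
  apply Integrable.const_mul
  have : ∀ x : ℝ, p.eval x * Real.exp (-(1/2 : ℝ) * x ^ 2)
      = ∑ k ∈ Finset.range (p.natDegree + 1),
        p.coeff k * (x ^ k * Real.exp (-(1/2 : ℝ) * x ^ 2)) := by
    intro x
    rw [Polynomial.eval_eq_sum_range, Finset.sum_mul]
    congr 1; ext k; ring
  simp_rw [this]
  exact integrable_finset_sum _ fun k _ => (integrable_pow_exp k).const_mul _

/-- Key step: even powers of a normalized polynomial have a lower-bounded second
Hermite-type moment. -/
theorem stmt3 (g : Polynomial ℝ) (hnorm : ∫ t, (g.eval t) ^ 2 ∂stdGauss = 1)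
    (τ : ℝ) (hτ : IsGreatest ((fun t => |g.eval t|) '' Set.Icc (-2 : ℝ) 2) τ)
    (i : ℕ) (hi : 1 ≤ i) (hieven : Even i) :
    3 * (stdGauss {t | 2 * τ ≤ |g.eval t|}).toReal - (1 / 2 : ℝ) ^ i ≤
      ∫ t, (g.eval t / (2 * τ)) ^ i * (t ^ 2 - 1) ∂stdGauss := by
  haveI : IsProbabilityMeasure stdGauss :=
    ProbabilityTheory.instIsProbabilityMeasureGaussianReal 0 1
  obtain ⟨⟨t₀, ht₀, hτeq⟩, hub⟩ := hτ
  have hτnn : 0 ≤ τ := hτeq ▸ abs_nonneg _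
  have hτpos : 0 < τ := by
    rcases hτnn.lt_or_eq with h | h
    · exact h
    · exfalso
      have hg0 : g = 0 := by
        apply Polynomial.eq_zero_of_infinite_isRoot
        refine (Set.Icc_infinite (by norm_num : (-2:ℝ) < 2)).mono fun t ht => ?_
        have := hub (Set.mem_image_of_mem _ ht)
        simp only [Polynomial.IsRoot, Set.mem_setOf_eq]
        rw [← abs_eq_zero]
        linarith [abs_nonneg (Polynomial.eval t g)]
      rw [hg0] at hnorm
      simp at hnorm
  set A : Set ℝ := {t | 2 * τ ≤ |g.eval t|} with hAdef
  have hA : MeasurableSet A :=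
    measurableSet_le measurable_const (g.continuous_aeval.abs.measurable)
  -- integrability of the RHS integrand
  set p : Polynomial ℝ := g ^ i * (Polynomial.X ^ 2 - 1) with hpdef
  have hfeq : (fun t : ℝ => (g.eval t / (2 * τ)) ^ i * (t ^ 2 - 1))
      = fun t => ((2 * τ) ^ i)⁻¹ * p.eval t := by
    funext t
    simp only [hpdef, Polynomial.eval_mul, Polynomial.eval_pow, Polynomial.eval_sub,
      Polynomial.eval_one, Polynomial.eval_X]
    rw [div_pow, div_eq_inv_mul]
    ring
  have hfInt : Integrable (fun t : ℝ => (g.eval t / (2 * τ)) ^ i * (t ^ 2 - 1)) stdGauss := by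
    rw [hfeq]
    exact (integrable_poly_stdGauss p).const_mul _
  -- lower bound function
  have hloInt : Integrable
      (fun t : ℝ => A.indicator (fun _ => (3:ℝ)) t - (1/2 : ℝ) ^ i) stdGauss :=
    ((integrable_const (3:ℝ)).indicator hA).sub (integrable_const _)
  have hpt : ∀ t : ℝ, A.indicator (fun _ => (3:ℝ)) t - (1/2 : ℝ) ^ i
      ≤ (g.eval t / (2 * τ)) ^ i * (t ^ 2 - 1) := by
    intro t
    by_cases hta : t ∈ A
    · rw [Set.indicator_of_mem hta]
      have hga : 2 * τ ≤ |g.eval t| := hta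
      have h2 : 2 < |t| := by
        by_contra h
        push_neg at h
        have htIcc : t ∈ Set.Icc (-2:ℝ) 2 := abs_le.mp h
        have := hub (Set.mem_image_of_mem _ htIcc)
        linarith
      have ht3 : 3 ≤ t ^ 2 - 1 := by nlinarith [sq_abs t]
      have hpow1 : 1 ≤ (g.eval t / (2 * τ)) ^ i := by
        rw [← hieven.pow_abs]
        apply one_le_pow₀
        rw [abs_div, abs_of_pos (by positivity : (0:ℝ) < 2 * τ), le_div_iff₀ (by positivity)]
        linarith
      have := mul_le_mul hpow1 ht3 (by norm_num) (le_trans zero_le_one hpow1)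
      have hhalf : (0:ℝ) ≤ (1/2 : ℝ) ^ i := by positivity
      linarith
    · rw [Set.indicator_of_notMem hta]
      have hnn : 0 ≤ (g.eval t / (2 * τ)) ^ i := hieven.pow_nonneg _
      by_cases h1 : 1 ≤ t ^ 2
      · have : 0 ≤ (g.eval t / (2 * τ)) ^ i * (t ^ 2 - 1) :=
          mul_nonneg hnn (by linarith)
        have hhalf : (0:ℝ) ≤ (1/2 : ℝ) ^ i := by positivity
        linarith
      · push_neg at h1
        have htIcc : t ∈ Set.Icc (-2:ℝ) 2 := by
          constructor <;> nlinarith [sq_abs t, abs_nonneg t, neg_abs_le t, le_abs_self t]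
        have hgle : |g.eval t| ≤ τ := hub (Set.mem_image_of_mem _ htIcc)
        have hq : |g.eval t / (2 * τ)| ≤ 1/2 := by
          rw [abs_div, abs_of_pos (by positivity : (0:ℝ) < 2 * τ),
            div_le_iff₀ (by positivity)]
          linarith
        have hple : (g.eval t / (2 * τ)) ^ i ≤ (1/2 : ℝ) ^ i := by
          rw [← hieven.pow_abs]
          exact pow_le_pow_left₀ (abs_nonneg _) hq i
        nlinarith [mul_nonneg hnn (sq_nonneg t)]
  have hmono := integral_mono hloInt hfInt hpt
  have hlo : ∫ t, (A.indicator (fun _ => (3:ℝ)) t - (1/2 : ℝ) ^ i) ∂stdGauss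
      = 3 * (stdGauss A).toReal - (1/2 : ℝ) ^ i := by
    rw [integral_sub ((integrable_const (3:ℝ)).indicator hA) (integrable_const _),
      integral_indicator_const _ hA, integral_const]
    simp [mul_comm]
    rfl
  rw [hlo] at hmono
  exact hmono
end

section
/- Let g : ℝ → ℝ be a nonconstant polynomial and τ = max_{t∈[-2,2]} |g(t)|. Then P_{t∼N(0,1)}[|g(t)| ≥ 2τ] > 0, and consequently there exists an even integer i such that E_{t∼N(0,1)}[g(t)^i·(t²−1)] > 0. -/
open MeasureTheory

open Real

lemma integrable_pow_gauss (n : ℕ) :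
    Integrable (fun x : ℝ => x ^ n * Real.exp (-(2⁻¹ : ℝ) * x ^ 2)) := by
  have h := integrable_rpow_mul_exp_neg_mul_sq (b := 2⁻¹) (by norm_num)
    (s := (n : ℝ)) (by exact_mod_cast neg_one_lt_zero.trans_le (Nat.cast_nonneg n))
  simpa [Real.rpow_natCast] using h

lemma integrable_poly_gauss (P : Polynomial ℝ) :
    Integrable (fun t => P.eval t) stdGauss := by
  rw [stdGauss, ProbabilityTheory.gaussianReal_of_var_ne_zero 0 one_ne_zero,
    integrable_withDensity_iff (ProbabilityTheory.measurable_gaussianPDF 0 1)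
      (ae_of_all _ fun x => ENNReal.ofReal_lt_top)]
  have heq : ∀ x : ℝ, P.eval x * (ProbabilityTheory.gaussianPDF 0 1 x).toReal
      = (√(2 * π))⁻¹ * (P.eval x * Real.exp (-(2⁻¹ : ℝ) * x ^ 2)) := by
    intro x
    rw [ProbabilityTheory.gaussianPDF, ENNReal.toReal_ofReal
      (ProbabilityTheory.gaussianPDFReal_nonneg _ _ _), ProbabilityTheory.gaussianPDFReal]
    have : -(x - 0) ^ 2 / (2 * ((1 : NNReal) : ℝ)) = -(2⁻¹ : ℝ) * x ^ 2 := by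
      push_cast; ring
    rw [this]; push_cast; ring_nf
  simp only [heq]
  apply Integrable.const_mul
  have : (fun x : ℝ => P.eval x * Real.exp (-(2⁻¹ : ℝ) * x ^ 2))
      = fun x : ℝ => ∑ k ∈ Finset.range (P.natDegree + 1),
          P.coeff k * (x ^ k * Real.exp (-(2⁻¹ : ℝ) * x ^ 2)) := by
    ext x
    rw [Polynomial.eval_eq_sum_range, Finset.sum_mul]
    congr 1; ext k; ring
  rw [this]
  exact integrable_finset_sum _ fun k _ => (integrable_pow_gauss k).const_mul _

/-- A nonconstant polynomial exceeds twice its max on [-2,2] with positive Gaussian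
probability; hence some even power has positive second Hermite-type moment. -/
theorem stmt4 (g : Polynomial ℝ) (hg : 0 < g.natDegree)
    (τ : ℝ) (hτ : IsGreatest ((fun t => |g.eval t|) '' Set.Icc (-2 : ℝ) 2) τ) :
    0 < (stdGauss {t | 2 * τ ≤ |g.eval t|}).toReal ∧
      ∃ i : ℕ, Even i ∧ 0 < ∫ t, g.eval t ^ i * (t ^ 2 - 1) ∂stdGauss := by
  have hprob : IsProbabilityMeasure stdGauss := by
    rw [stdGauss]; infer_instance
  -- τ > 0
  have hub : ∀ t ∈ Set.Icc (-2:ℝ) 2, |g.eval t| ≤ τ := by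
    intro t ht
    exact hτ.2 ⟨t, ht, rfl⟩
  have hτnn : 0 ≤ τ := by
    obtain ⟨t, -, ht⟩ := hτ.1
    rw [← ht]; positivity
  have hτpos : 0 < τ := by
    rcases hτnn.lt_or_eq with h | h
    · exact h
    · exfalso
      have hg0 : g = 0 := by
        apply Polynomial.eq_zero_of_infinite_isRoot
        apply Set.Infinite.mono (s := Set.Icc (-2:ℝ) 2)
        · intro t ht
          have := hub t ht
          rw [← h] at this
          simpa [Polynomial.IsRoot] using abs_nonpos_iff.mp this
        · exact @Set.Icc_infinite ℝ _ _ _ _ (by norm_num : (-2:ℝ) < 2)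
      rw [hg0] at hg; simp at hg
  -- the tail bound set
  have htend : Filter.Tendsto (fun x => |g.eval x|) Filter.atTop Filter.atTop :=
    Polynomial.abs_tendsto_atTop g (Polynomial.natDegree_pos_iff_degree_pos.mp hg)
  obtain ⟨M₀, hM₀⟩ := (htend.eventually_ge_atTop (2 * τ)).exists_forall_of_atTop
  set M : ℝ := max M₀ 3 with hM
  have hM3 : (3:ℝ) ≤ M := le_max_right _ _
  have hMg : ∀ t ∈ Set.Ici M, 2 * τ ≤ |g.eval t| := fun t ht =>
    hM₀ t ((le_max_left _ _).trans ht)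
  -- positivity of the Ici M measure
  have habs : (volume : Measure ℝ) ≪ stdGauss := by
    rw [stdGauss]
    exact ProbabilityTheory.gaussianReal_absolutelyContinuous' 0 one_ne_zero
  have hIci_ne : stdGauss (Set.Ici M) ≠ 0 := by
    intro h0
    have := habs h0
    simp [Real.volume_Ici] at this
  have hfin : stdGauss (Set.Ici M) ≠ ⊤ := measure_ne_top _ _
  set p : ℝ := (stdGauss (Set.Ici M)).toReal with hp
  have hppos : 0 < p := ENNReal.toReal_pos hIci_ne hfin
  constructor
  · have hsub : Set.Ici M ⊆ {t | 2 * τ ≤ |g.eval t|} := fun t ht => hMg t ht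
    have hle := measure_mono (μ := stdGauss) hsub
    refine ENNReal.toReal_pos (fun h0 => hIci_ne (le_antisymm (h0 ▸ hle) zero_le)) (measure_ne_top _ _)
  · -- choose n with 1 < 3 * p * 4 ^ n
    obtain ⟨n, hn⟩ := pow_unbounded_of_one_lt (1 / (3 * p)) (by norm_num : (1:ℝ) < 4)
    refine ⟨2 * n, even_two_mul n, ?_⟩
    set i : ℕ := 2 * n with hi
    have hieven : Even i := even_two_mul n
    set f : ℝ → ℝ := fun t => g.eval t ^ i * (t ^ 2 - 1) with hf
    -- integrability
    have hInt : Integrable f stdGauss := by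
      have := integrable_poly_gauss (g ^ i * (Polynomial.X ^ 2 - Polynomial.C 1))
      simpa [hf, Polynomial.eval_mul, Polynomial.eval_pow, Polynomial.eval_sub] using this
    set A : Set ℝ := Set.Icc (-2:ℝ) 2 with hA
    have hAm : MeasurableSet A := measurableSet_Icc
    -- lower bound on A
    have hboundA : ∀ t ∈ A, -τ ^ i ≤ f t := by
      intro t ht
      have h1 : g.eval t ^ i ≤ τ ^ i := by
        rw [← hieven.pow_abs]
        exact pow_le_pow_left₀ (abs_nonneg _) (hub t ht) i
      have h2 : 0 ≤ g.eval t ^ i := hieven.pow_nonneg _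
      have h3 : (-1 : ℝ) ≤ t ^ 2 - 1 := by nlinarith [sq_nonneg t]
      calc -τ ^ i ≤ -(g.eval t ^ i) := by linarith
        _ = g.eval t ^ i * (-1) := by ring
        _ ≤ g.eval t ^ i * (t ^ 2 - 1) := mul_le_mul_of_nonneg_left h3 h2
    have hIA : -τ ^ i ≤ ∫ t in A, f t ∂stdGauss := by
      have hci : IntegrableOn (fun _ : ℝ => -τ ^ i) A stdGauss :=
        (integrableOn_const_iff).mpr (Or.inr (measure_lt_top _ _))
      have := setIntegral_mono_on hci (hInt.integrableOn) hAm hboundA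
      calc -τ ^ i = (-τ ^ i) * 1 := by ring
        _ ≤ (-τ ^ i) * (stdGauss A).toReal := by
            have h1 : (stdGauss A).toReal ≤ 1 := by
              simpa using ENNReal.toReal_mono ENNReal.one_ne_top prob_le_one
            have h2 : 0 ≤ (stdGauss A).toReal := ENNReal.toReal_nonneg
            have h3 : (0:ℝ) ≤ τ ^ i := by positivity
            nlinarith
        _ = ∫ _ in A, (-τ ^ i) ∂stdGauss := by
            rw [setIntegral_const, smul_eq_mul, measureReal_def]; ring
        _ ≤ ∫ t in A, f t ∂stdGauss := this
    -- lower bound on Aᶜ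
    have hfposc : ∀ t ∈ Aᶜ, 0 ≤ f t := by
      intro t ht
      have h2 : 0 ≤ g.eval t ^ i := hieven.pow_nonneg _
      have h3 : (0:ℝ) ≤ t ^ 2 - 1 := by
        simp only [hA, Set.mem_compl_iff, Set.mem_Icc, not_and_or, not_le] at ht
        rcases ht with h | h <;> nlinarith
      positivity
    have hsubc : Set.Ici M ⊆ Aᶜ := by
      intro t ht
      simp only [hA, Set.mem_compl_iff, Set.mem_Icc, not_and_or, not_le]
      right; linarith [ht.out]
    have hboundM : ∀ t ∈ Set.Ici M, (2 * τ) ^ i * 3 ≤ f t := by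
      intro t ht
      have h1 : (2 * τ) ^ i ≤ g.eval t ^ i := by
        rw [← hieven.pow_abs (g.eval t)]
        exact pow_le_pow_left₀ (by positivity) (hMg t ht) i
      have h3 : (3:ℝ) ≤ t ^ 2 - 1 := by
        have : (3:ℝ) ≤ t := hM3.trans ht.out
        nlinarith
      have h2 : 0 ≤ g.eval t ^ i := hieven.pow_nonneg _
      calc (2 * τ) ^ i * 3 ≤ g.eval t ^ i * 3 := by
            exact mul_le_mul_of_nonneg_right h1 (by norm_num)
        _ ≤ g.eval t ^ i * (t ^ 2 - 1) := mul_le_mul_of_nonneg_left h3 h2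
    have hIM : (2 * τ) ^ i * 3 * p ≤ ∫ t in Set.Ici M, f t ∂stdGauss := by
      have hci : IntegrableOn (fun _ : ℝ => (2 * τ) ^ i * 3) (Set.Ici M) stdGauss :=
        (integrableOn_const_iff).mpr (Or.inr (measure_lt_top _ _))
      have := setIntegral_mono_on hci (hInt.integrableOn) measurableSet_Ici hboundM
      calc (2 * τ) ^ i * 3 * p = ∫ _ in Set.Ici M, ((2 * τ) ^ i * 3) ∂stdGauss := by
            rw [setIntegral_const, smul_eq_mul, hp, measureReal_def]; ring
        _ ≤ _ := this
    have hIAc : (2 * τ) ^ i * 3 * p ≤ ∫ t in Aᶜ, f t ∂stdGauss := by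
      refine hIM.trans (setIntegral_mono_set hInt.integrableOn ?_ (HasSubset.Subset.eventuallyLE hsubc))
      exact (ae_restrict_iff' hAm.compl).mpr (ae_of_all _ hfposc)
    -- combine
    have hsplit : (∫ t in A, f t ∂stdGauss) + (∫ t in Aᶜ, f t ∂stdGauss) = ∫ t, f t ∂stdGauss :=
      integral_add_compl hAm hInt
    have h2i : (4:ℝ) ^ n = 2 ^ i := by
      rw [hi, pow_mul]; norm_num
    have hkey : 0 < -τ ^ i + (2 * τ) ^ i * 3 * p := by
      have hτi : 0 < τ ^ i := by positivity
      have : 1 / (3 * p) < 2 ^ i := h2i ▸ hn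
      rw [div_lt_iff₀ (by positivity)] at this
      have : (2 * τ) ^ i = 2 ^ i * τ ^ i := mul_pow 2 τ i
      nlinarith [hτi, hppos]
    calc (0:ℝ) < -τ ^ i + (2 * τ) ^ i * 3 * p := hkey
      _ ≤ (∫ t in A, f t ∂stdGauss) + (∫ t in Aᶜ, f t ∂stdGauss) := add_le_add hIA hIAc
      _ = ∫ t, f t ∂stdGauss := hsplit
end

section
/- Let y = σ_*(z) where z ∼ N(0,1), and suppose there exists an orthonormal polynomial basis {φ_k}_{k≥0} of L²(P_y) with inner product ⟨f,g⟩ = E[f(y)g(y)]. If the generative exponent of σ_* is p_* (i.e., p_* = min over T ∈ L²(P_y) of IE(T∘σ_*)), then there exists a positive integer I such that IE(σ_*^I) = p_*. -/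
open MeasureTheory

/-- The information exponent of h is exactly p. -/
def IEat (h : ℝ → ℝ) (p : ℕ) : Prop :=
  0 < p ∧ Hc h p ≠ 0 ∧ ∀ i, 0 < i → i < p → Hc h i = 0


open Polynomial Filter ProbabilityTheory Real

lemma stdGauss_eq : stdGauss
    = MeasureTheory.volume.withDensity (fun x => ((gaussianPDFReal 0 1 x).toNNReal : ENNReal)) := by
  rw [stdGauss, gaussianReal_of_var_ne_zero _ one_ne_zero]
  rfl

instance : IsProbabilityMeasure stdGauss := by
  rw [stdGauss]; infer_instance

lemma integral_stdGauss (f : ℝ → ℝ) :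
    ∫ x, f x ∂stdGauss = ∫ x, gaussianPDFReal 0 1 x * f x ∂(volume : Measure ℝ) := by
  rw [stdGauss_eq, integral_withDensity_eq_integral_smul
    ((measurable_gaussianPDFReal 0 1).real_toNNReal) f]
  refine integral_congr_ae (Eventually.of_forall fun x => ?_)
  simp [NNReal.smul_def, Real.coe_toNNReal _ (gaussianPDFReal_nonneg 0 1 x)]

lemma integrable_stdGauss_iff {f : ℝ → ℝ} :
    Integrable f stdGauss ↔ Integrable (fun x => f x * gaussianPDFReal 0 1 x) volume := by
  rw [stdGauss_eq, integrable_withDensity_iff ((measurable_gaussianPDFReal 0 1).real_toNNReal.coe_nnreal_ennreal)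
    (Eventually.of_forall fun x => ENNReal.coe_lt_top)]
  constructor <;> intro h <;> refine h.congr (Eventually.of_forall fun x => ?_) <;>
    simp [Real.coe_toNNReal _ (gaussianPDFReal_nonneg 0 1 x)]

lemma gaussianPDFReal_std (x : ℝ) :
    gaussianPDFReal 0 1 x = (√(2 * π))⁻¹ * rexp (-(x ^ 2 / 2)) := by
  simp only [gaussianPDFReal, NNReal.coe_one, mul_one, sub_zero]
  norm_num
  left; ring

lemma integrable_pow_stdGauss (n : ℕ) : Integrable (fun x : ℝ => x ^ n) stdGauss := by
  rw [integrable_stdGauss_iff]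
  have h := integrable_rpow_mul_exp_neg_mul_sq (b := (2:ℝ)⁻¹) (by norm_num)
    (s := (n:ℝ)) (by exact_mod_cast neg_one_lt_zero.trans_le (Nat.cast_nonneg n))
  have h2 := h.const_mul ((√(2 * π))⁻¹)
  refine h2.congr (Eventually.of_forall fun x => ?_)
  simp only [gaussianPDFReal_std, Real.rpow_natCast]
  ring_nf

lemma integrable_poly_stdGauss_s17 (P : ℝ[X]) : Integrable (fun x => P.eval x) stdGauss := by
  induction P using Polynomial.induction_on' with
  | add p q hp hq => simpa [eval_add, Pi.add_def] using hp.add hq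
  | monomial n a => simpa [eval_monomial] using (integrable_pow_stdGauss n).const_mul a

lemma memLp_poly_stdGauss (P : ℝ[X]) : MemLp (fun x => P.eval x) 2 stdGauss := by
  rw [memLp_two_iff_integrable_sq (P.continuous).aestronglyMeasurable]
  have := integrable_poly_stdGauss_s17 (P * P)
  refine this.congr (Eventually.of_forall fun x => ?_)
  simp [eval_mul, sq]


noncomputable def herm (n : ℕ) : Polynomial ℝ := (Polynomial.hermite n).map (Int.castRingHom ℝ)

lemma He_eq (n : ℕ) : He n = fun t => (Real.sqrt (n.factorial))⁻¹ * eval t (herm n) := by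
  funext t
  rw [He, div_eq_inv_mul]
  congr 1
  rw [Polynomial.aeval_def, herm, Polynomial.eval_map]
  rfl

lemma memLp_He (n : ℕ) : MemLp (He n) 2 stdGauss := by
  rw [He_eq]
  exact (memLp_poly_stdGauss (herm n)).const_mul _

lemma integrable_mul_L2 {α : Type*} [MeasurableSpace α] {μ : Measure α} {f g : α → ℝ}
    (hf : MemLp f 2 μ) (hg : MemLp g 2 μ) : Integrable (fun x => f x * g x) μ := by
  rw [← memLp_one_iff_integrable]
  have h := hg.smul hf (p := 2) (q := 2) (r := 1)
  exact h

lemma tendsto_poly_gauss_atTop (P : ℝ[X]) :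
    Tendsto (fun x => eval x P * rexp (-(x ^ 2 / 2))) atTop (nhds 0) := by
  have h1 : Tendsto (fun x => eval x P / rexp x) atTop (nhds 0) := P.tendsto_div_exp_atTop
  have h2 : Tendsto (fun x : ℝ => rexp (x - x ^ 2 / 2)) atTop (nhds 0) := by
    apply Real.tendsto_exp_atBot.comp
    apply tendsto_atBot_mono' atTop ?_ tendsto_neg_atTop_atBot
    filter_upwards [eventually_ge_atTop (4:ℝ)] with x hx
    nlinarith
  have h3 := h1.mul h2
  rw [zero_mul] at h3
  refine h3.congr' ?_
  filter_upwards with x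
  rw [Real.exp_sub, Real.exp_neg]
  field_simp

lemma tendsto_poly_gauss_atBot (P : ℝ[X]) :
    Tendsto (fun x => eval x P * rexp (-(x ^ 2 / 2))) atBot (nhds 0) := by
  have h := (tendsto_poly_gauss_atTop (P.comp (-X))).comp tendsto_neg_atBot_atTop
  refine h.congr fun x => ?_
  simp [Function.comp, eval_comp, neg_sq]

lemma hasDerivAt_poly_gauss (Q : ℝ[X]) (x : ℝ) :
    HasDerivAt (fun y => eval y Q * rexp (-(y ^ 2 / 2)))
      (-(eval x (X * Q - derivative Q) * rexp (-(x ^ 2 / 2)))) x := by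
  have h1 : HasDerivAt (fun y : ℝ => -(y ^ 2 / 2)) (-x) x := by
    have := ((hasDerivAt_pow 2 x).div_const 2).neg
    simp at this; exact this
  have h2 := (Q.hasDerivAt x).fun_mul h1.exp
  refine h2.congr_deriv ?_
  simp [eval_mul, eval_sub]
  ring

lemma integral_poly_gauss_deriv (Q : ℝ[X]) :
    ∫ x : ℝ, eval x (X * Q - derivative Q) * rexp (-(x ^ 2 / 2)) = 0 := by
  set F := fun y => eval y Q * rexp (-(y ^ 2 / 2)) with hF
  set f := fun x => -(eval x (X * Q - derivative Q) * rexp (-(x ^ 2 / 2))) with hf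
  have hint : Integrable f volume := by
    have h0 := ((integrable_stdGauss_iff.mp
      (integrable_poly_stdGauss_s17 (X * Q - derivative Q))).const_mul (√(2 * π))).neg
    have hne : (√(2 * π)) ≠ 0 := by positivity
    refine h0.congr (Eventually.of_forall fun x => ?_)
    simp only [hf, gaussianPDFReal_std]
    field_simp
    rfl
  have hIoi : ∫ x in Set.Ioi (0:ℝ), f x = 0 - F 0 :=
    integral_Ioi_of_hasDerivAt_of_tendsto' (fun x _ => hasDerivAt_poly_gauss Q x)
      hint.integrableOn (tendsto_poly_gauss_atTop Q)
  have hIic : ∫ x in Set.Iic (0:ℝ), f x = F 0 - 0 :=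
    integral_Iic_of_hasDerivAt_of_tendsto' (fun x _ => hasDerivAt_poly_gauss Q x)
      hint.integrableOn (tendsto_poly_gauss_atBot Q)
  have := intervalIntegral.integral_Iic_add_Ioi (μ := volume) (b := (0:ℝ)) hint.integrableOn hint.integrableOn
  have hf0 : ∫ x : ℝ, f x = 0 := by rw [← this, hIoi, hIic]; ring
  have h4 : ∫ x : ℝ, eval x (X * Q - derivative Q) * rexp (-(x ^ 2 / 2))
      = - ∫ x : ℝ, f x := by
    rw [← integral_neg]
    refine integral_congr_ae (Eventually.of_forall fun x => ?_)
    simp [hf]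
  rw [h4, hf0, neg_zero]

lemma herm_succ (m : ℕ) : herm (m + 1) = X * herm m - derivative (herm m) := by
  simp only [herm, Polynomial.hermite_succ, Polynomial.map_sub, Polynomial.map_mul,
    Polynomial.map_X, Polynomial.derivative_map]

lemma integral_He_zero (n : ℕ) (hn : 0 < n) : ∫ x, He n x ∂stdGauss = 0 := by
  obtain ⟨m, rfl⟩ : ∃ m, n = m + 1 := ⟨n - 1, by omega⟩
  rw [He_eq, integral_const_mul, integral_stdGauss]
  have h1 : ∫ x, gaussianPDFReal 0 1 x * eval x (herm (m + 1)) ∂(volume : Measure ℝ)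
      = (√(2 * π))⁻¹ * ∫ x : ℝ, eval x (X * herm m - derivative (herm m)) * rexp (-(x ^ 2 / 2)) := by
    rw [← integral_const_mul]
    refine integral_congr_ae (Eventually.of_forall fun x => ?_)
    simp only [gaussianPDFReal_std, herm_succ]
    ring
  rw [h1, integral_poly_gauss_deriv, mul_zero, mul_zero]

open Asymptotics in
lemma abs_le_aux (P : ℝ[X]) (hP : P ≠ 0) :
    ∀ᶠ y in atTop, |y| ^ P.natDegree ≤ (2 / |P.leadingCoeff|) * |P.eval y| := by
  have h := P.isEquivalent_atTop_lead
  have hb := h.isLittleO.def (by norm_num : (0:ℝ) < 1/2)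
  filter_upwards [hb] with y hy
  have ha : 0 < |P.leadingCoeff| := abs_pos.mpr (leadingCoeff_ne_zero.mpr hP)
  have h2 : |P.leadingCoeff * y ^ P.natDegree| - |P.eval y|
      ≤ |eval y P - P.leadingCoeff * y ^ P.natDegree| := by
    have := abs_sub_abs_le_abs_sub (P.leadingCoeff * y ^ P.natDegree) (eval y P)
    rw [abs_sub_comm] at this
    exact this
  rw [Real.norm_eq_abs, Real.norm_eq_abs] at hy
  have h3 : |P.leadingCoeff| * |y| ^ P.natDegree ≤ 2 * |P.eval y| := by
    simp only [Pi.sub_apply, abs_mul, abs_pow] at h2 hy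
    nlinarith [abs_nonneg (P.eval y)]
  rw [div_mul_eq_mul_div, le_div_iff₀ ha]
  nlinarith

lemma comp_negX_ne_zero (P : ℝ[X]) (hP : P ≠ 0) : P.comp (-X) ≠ 0 := by
  intro h
  apply hP
  have : (P.comp (-X)).comp (-X) = P := by
    rw [Polynomial.comp_assoc]
    simp
  rw [h, Polynomial.zero_comp] at this
  exact this.symm

lemma natDegree_comp_negX (P : ℝ[X]) : (P.comp (-X)).natDegree = P.natDegree := by
  rw [Polynomial.natDegree_comp]
  simp

lemma abs_le_aux_bot (P : ℝ[X]) (hP : P ≠ 0) :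
    ∀ᶠ y in atBot, |y| ^ P.natDegree ≤ (2 / |(P.comp (-X)).leadingCoeff|) * |P.eval y| := by
  have h := abs_le_aux (P.comp (-X)) (comp_negX_ne_zero P hP)
  have h2 := tendsto_neg_atBot_atTop.eventually h
  filter_upwards [h2] with y hy
  rw [natDegree_comp_negX, abs_neg] at hy
  have : eval (-y) (P.comp (-X)) = P.eval y := by
    rw [Polynomial.eval_comp]
    simp
  rwa [this] at hy

lemma poly_growth (P : ℝ[X]) (hP : P ≠ 0) {j : ℕ} (hj : j ≤ P.natDegree) :
    ∃ C : ℝ, ∀ y : ℝ, |y| ^ j ≤ C * (1 + |P.eval y|) := by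
  obtain ⟨R1, h1⟩ := eventually_atTop.mp (abs_le_aux P hP)
  obtain ⟨R2, h2⟩ := eventually_atBot.mp (abs_le_aux_bot P hP)
  set d := P.natDegree with hd
  set M : ℝ := max R1 (max (-R2) 1) with hM
  have hM1 : (1:ℝ) ≤ M := le_max_of_le_right (le_max_right _ _)
  set C1 : ℝ := 2 / |P.leadingCoeff| with hC1
  set C2 : ℝ := 2 / |(P.comp (-X)).leadingCoeff| with hC2
  have hC1p : 0 ≤ C1 := by positivity
  have hC2p : 0 ≤ C2 := by positivity
  refine ⟨max (M ^ d) (max C1 C2), fun y => ?_⟩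
  have hCp : 0 < max (M ^ d) (max C1 C2) :=
    lt_of_lt_of_le (by positivity) (le_max_left _ _)
  have habs : (0:ℝ) ≤ |P.eval y| := abs_nonneg _
  rcases le_total |y| M with hyM | hyM
  · have : |y| ^ j ≤ M ^ d := by
      calc |y| ^ j ≤ M ^ j := pow_le_pow_left₀ (abs_nonneg y) hyM j
      _ ≤ M ^ d := pow_le_pow_right₀ hM1 hj
    nlinarith [le_max_left (M ^ d) (max C1 C2)]
  · have hyj : |y| ^ j ≤ |y| ^ d := pow_le_pow_right₀ (hM1.trans hyM) hj
    rcases le_abs.mp hyM with hy | hy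
    · have := h1 y (le_trans (le_max_left _ _) hy)
      have hC1le : C1 ≤ max (M ^ d) (max C1 C2) :=
        le_trans (le_max_left C1 C2) (le_max_right _ _)
      nlinarith
    · have hyR2 : y ≤ R2 := by
        have : -R2 ≤ M := le_trans (le_max_left _ _) (le_max_right _ _)
        linarith
      have := h2 y hyR2
      have hC2le : C2 ≤ max (M ^ d) (max C1 C2) :=
        le_trans (le_max_right C1 C2) (le_max_right _ _)
      nlinarith

/-- If the label distribution admits an orthonormal polynomial basis of its L^2 space,
then some power of the link function attains the generative exponent as its
information exponent. -/
theorem stmt17 (σs : ℝ → ℝ) (hmeas : Measurable σs)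
    (Py : Measure ℝ) (hPy : Py = Measure.map σs stdGauss)
    (φ : ℕ → ℝ → ℝ) (hpoly : ∀ k, ∃ P : Polynomial ℝ, ∀ y, φ k y = P.eval y)
    (horth : ∀ k l, ∫ y, φ k y * φ l y ∂Py = if k = l then 1 else 0)
    (htotal : ∀ f : ℝ → ℝ, MemLp f 2 Py →
      (∀ k, ∫ y, f y * φ k y ∂Py = 0) → f =ᵐ[Py] 0)
    (ps : ℕ)
    (hGE1 : ∃ T : ℝ → ℝ, MemLp T 2 Py ∧ IEat (fun z => T (σs z)) ps)
    (hGE2 : ∀ T : ℝ → ℝ, MemLp T 2 Py → ∀ p', IEat (fun z => T (σs z)) p' → ps ≤ p') :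
    ∃ I : ℕ, 0 < I ∧ IEat (fun z => σs z ^ I) ps := by
  classical
  subst hPy
  set Py := Measure.map σs stdGauss with hPy
  obtain ⟨T, hT2, hTps⟩ := hGE1
  have hps : 0 < ps := hTps.1
  have hσ : MeasurePreserving σs stdGauss Py := ⟨hmeas, rfl⟩
  haveI : IsProbabilityMeasure Py := Measure.isProbabilityMeasure_map hmeas.aemeasurable
  -- measurability and L² membership of the basis
  have hφmeas : ∀ k, AEStronglyMeasurable (φ k) Py := by
    intro k
    obtain ⟨P, hPk⟩ := hpoly k
    have : φ k = fun y => P.eval y := funext hPk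
    rw [this]
    exact P.continuous.aestronglyMeasurable
  have hφL2 : ∀ k, MemLp (φ k) 2 Py := by
    intro k
    rw [memLp_two_iff_integrable_sq (hφmeas k)]
    by_contra hni
    have : ∫ y, φ k y * φ k y ∂Py = 0 := by
      rw [integral_undef]
      intro h
      apply hni
      refine h.congr (Eventually.of_forall fun y => ?_)
      exact (sq (φ k y)).symm
    rw [horth k k, if_pos rfl] at this
    norm_num at this
  -- unbounded degrees
  have hdeg : ∀ D : ℕ, ∃ (P : Polynomial ℝ) (k : ℕ), (∀ y, φ k y = P.eval y)
      ∧ D ≤ P.natDegree := by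
    intro D
    by_contra hcon
    push_neg at hcon
    choose P hP using hpoly
    have hdlt : ∀ k, (P k).natDegree < D := fun k => hcon (P k) k (hP k)
    set v : Fin (D + 1) → (Fin D → ℝ) := fun k i => (P (k : ℕ)).coeff (i : ℕ) with hv
    have hnli : ¬ LinearIndependent ℝ v := by
      intro hli
      have := hli.fintype_card_le_finrank
      rw [Module.finrank_fintype_fun_eq_card] at this
      simp [Fintype.card_fin] at this
    obtain ⟨c, hsum, i₀, hi₀⟩ := Fintype.not_linearIndependent_iff.mp hnli
    have hcoeff : ∀ i : Fin D, ∑ k : Fin (D + 1), c k * (P (k : ℕ)).coeff (i : ℕ) = 0 := by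
      intro i
      have := congrFun hsum i
      simpa [hv] using this
    have hzero : ∀ y : ℝ, (∑ k : Fin (D + 1), c k * φ (k : ℕ) y) = 0 := by
      intro y
      have h1 : ∀ k : Fin (D + 1), φ (k : ℕ) y
          = ∑ i : Fin D, (P (k : ℕ)).coeff (i : ℕ) * y ^ (i : ℕ) := by
        intro k
        rw [hP, Polynomial.eval_eq_sum_range' (hdlt (k : ℕ)), ← Fin.sum_univ_eq_sum_range]
      simp_rw [h1, Finset.mul_sum]
      rw [Finset.sum_comm]
      refine Finset.sum_eq_zero fun i _ => ?_
      calc ∑ k : Fin (D + 1), c k * ((P (k : ℕ)).coeff (i : ℕ) * y ^ (i : ℕ))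
          = (∑ k : Fin (D + 1), c k * (P (k : ℕ)).coeff (i : ℕ)) * y ^ (i : ℕ) := by
            rw [Finset.sum_mul]; exact Finset.sum_congr rfl fun k _ => by ring
        _ = 0 := by rw [hcoeff, zero_mul]
    have hci₀ : c i₀ = 0 := by
      have h2 : ∫ y, (∑ k : Fin (D + 1), c k * φ (k : ℕ) y) * φ (i₀ : ℕ) y ∂Py = 0 := by
        simp only [hzero, zero_mul, integral_zero]
      have h3 : ∫ y, (∑ k : Fin (D + 1), c k * φ (k : ℕ) y) * φ (i₀ : ℕ) y ∂Py
          = ∑ k : Fin (D + 1), c k * ∫ y, φ (k : ℕ) y * φ (i₀ : ℕ) y ∂Py := by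
        have heq : (fun y => (∑ k : Fin (D + 1), c k * φ (k : ℕ) y) * φ (i₀ : ℕ) y)
            = fun y => ∑ k : Fin (D + 1), c k * (φ (k : ℕ) y * φ (i₀ : ℕ) y) := by
          funext y
          rw [Finset.sum_mul]
          exact Finset.sum_congr rfl fun k _ => by ring
        rw [heq, integral_finset_sum]
        · exact Finset.sum_congr rfl fun k _ => integral_const_mul _ _
        · intro k _
          exact (integrable_mul_L2 (hφL2 (k : ℕ)) (hφL2 (i₀ : ℕ))).const_mul _
      rw [h3] at h2
      have h4 : ∀ k : Fin (D + 1),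
          c k * ∫ y, φ (k : ℕ) y * φ (i₀ : ℕ) y ∂Py
            = if k = i₀ then c k else 0 := by
        intro k
        rw [horth]
        by_cases hk : k = i₀
        · simp [hk]
        · have : (k : ℕ) ≠ (i₀ : ℕ) := fun h => hk (Fin.val_injective h)
          simp [this, hk]
      rw [Finset.sum_congr rfl fun k _ => h4 k, Finset.sum_ite_eq' Finset.univ i₀ c] at h2
      simpa using h2
    exact hi₀ hci₀
  -- powers are in L²(Py)
  have hpowPy : ∀ j : ℕ, MemLp (fun y : ℝ => y ^ j) 2 Py := by
    intro j
    rcases Nat.eq_zero_or_pos j with rfl | hj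
    · simpa using memLp_const (μ := Py) (1 : ℝ)
    · obtain ⟨P, k, hPk, hjd⟩ := hdeg j
      have hP0 : P ≠ 0 := by
        intro h
        rw [h, Polynomial.natDegree_zero] at hjd
        omega
      obtain ⟨C, hC⟩ := poly_growth P hP0 hjd
      have hPL2 : MemLp (fun y => P.eval y) 2 Py := by
        have : (fun y => P.eval y) = φ k := funext fun y => (hPk y).symm
        rw [this]; exact hφL2 k
      have hg : MemLp (fun y => C * (1 + |P.eval y|)) 2 Py :=
        ((memLp_const (1:ℝ)).add hPL2.abs).const_mul C
      refine hg.of_le ((measurable_id.pow_const j).aestronglyMeasurable) ?_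
      refine Eventually.of_forall fun y => ?_
      rw [Real.norm_eq_abs, abs_pow]
      exact (hC y).trans (le_abs_self _)
  have hpowG : ∀ j : ℕ, MemLp (fun z => σs z ^ j) 2 stdGauss := fun j =>
    (hpowPy j).comp_measurePreserving hσ
  -- main existence of a power with nonzero ps-th Hermite coefficient
  have hmain : ∃ I : ℕ, 0 < I ∧ Hc (fun z => σs z ^ I) ps ≠ 0 := by
    by_contra hno
    push_neg at hno
    set HeL : Lp ℝ 2 stdGauss := (memLp_He ps).toLp (He ps) with hHeL
    set CMP := Lp.compMeasurePreservingₗᵢ (E := ℝ) (p := 2) ℝ σs hσ with hCMP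
    set L : Lp ℝ 2 Py →L[ℝ] ℝ :=
      (innerSL ℝ HeL).comp CMP.toContinuousLinearMap with hL
    set g : Lp ℝ 2 Py := (InnerProductSpace.toDual ℝ (Lp ℝ 2 Py)).symm L with hg
    have hkey : ∀ (f : ℝ → ℝ), MemLp f 2 Py →
        ∫ y, (g : ℝ → ℝ) y * f y ∂Py = ∫ z, He ps z * f (σs z) ∂stdGauss := by
      intro f hf
      have h1 : ∫ y, (g : ℝ → ℝ) y * f y ∂Py = @inner ℝ _ _ g (hf.toLp f) := by
        rw [L2.inner_def]
        refine integral_congr_ae ?_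
        filter_upwards [hf.coeFn_toLp] with y hy
        rw [hy, RCLike.inner_apply]
        simp
        ring
      have h2 : @inner ℝ _ _ g (hf.toLp f) = L (hf.toLp f) :=
        InnerProductSpace.toDual_symm_apply
      have h3 : L (hf.toLp f) = @inner ℝ _ _ HeL (CMP (hf.toLp f)) := rfl
      have h4 : @inner ℝ _ _ HeL (CMP (hf.toLp f)) = ∫ z, He ps z * f (σs z) ∂stdGauss := by
        rw [L2.inner_def]
        refine integral_congr_ae ?_
        have hae1 : (CMP (hf.toLp f) : ℝ → ℝ) =ᵐ[stdGauss] (fun z => (hf.toLp f : ℝ → ℝ) (σs z)) :=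
          Lp.coeFn_compMeasurePreserving _ hσ
        have hae2 : (fun z => (hf.toLp f : ℝ → ℝ) (σs z)) =ᵐ[stdGauss] (fun z => f (σs z)) := by
          exact ae_eq_comp hmeas.aemeasurable hf.coeFn_toLp
        filter_upwards [(memLp_He ps).coeFn_toLp, hae1, hae2] with z hz1 hz2 hz3
        rw [RCLike.inner_apply, hz2, hz3, hHeL, hz1]
        simp
        ring
      rw [h1, h2, h3, h4]
    have hczero : ∀ k, ∫ z, He ps z * φ k (σs z) ∂stdGauss = 0 := by
      intro k
      obtain ⟨P, hPk⟩ := hpoly k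
      have heq : (fun z => He ps z * φ k (σs z))
          = fun z => ∑ j ∈ Finset.range (P.natDegree + 1),
              P.coeff j * (He ps z * σs z ^ j) := by
        funext z
        rw [hPk, Polynomial.eval_eq_sum_range, Finset.mul_sum]
        exact Finset.sum_congr rfl fun j _ => by ring
      rw [heq, integral_finset_sum]
      · refine Finset.sum_eq_zero fun j _ => ?_
        rw [integral_const_mul]
        rcases Nat.eq_zero_or_pos j with rfl | hjpos
        · simp only [pow_zero, mul_one]
          rw [integral_He_zero ps hps, mul_zero]
        · have hHc := hno j hjpos
          rw [Hc] at hHc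
          have : ∫ z, He ps z * σs z ^ j ∂stdGauss = 0 := by
            rw [← hHc]
            exact integral_congr_ae (Eventually.of_forall fun z => (mul_comm _ _))
          rw [this, mul_zero]
      · intro j _
        exact (integrable_mul_L2 (memLp_He ps) (hpowG j)).const_mul _
    have hgphi : ∀ k, ∫ y, (g : ℝ → ℝ) y * φ k y ∂Py = 0 := fun k => by
      rw [hkey (φ k) (hφL2 k), hczero k]
    have hg0 : (g : ℝ → ℝ) =ᵐ[Py] 0 := htotal _ (Lp.memLp g) hgphi
    have hTzero : Hc (fun z => T (σs z)) ps = 0 := by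
      rw [Hc]
      have h1 : ∫ z, T (σs z) * He ps z ∂stdGauss = ∫ z, He ps z * T (σs z) ∂stdGauss :=
        integral_congr_ae (Eventually.of_forall fun z => mul_comm _ _)
      rw [h1, ← hkey T hT2]
      refine integral_eq_zero_of_ae ?_
      filter_upwards [hg0] with y hy
      rw [hy]
      simp
    exact hTps.2.1 hTzero
  -- final assembly
  obtain ⟨I, hI, hHcI⟩ := hmain
  have hex : ∃ i, 0 < i ∧ Hc (fun z => σs z ^ I) i ≠ 0 := ⟨ps, hps, hHcI⟩
  set i₀ := Nat.find hex with hi₀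
  have hi₀S := Nat.find_spec hex
  have hIE : IEat (fun z => σs z ^ I) i₀ := by
    refine ⟨hi₀S.1, hi₀S.2, fun i hipos hilt => ?_⟩
    by_contra hne
    exact Nat.find_min hex hilt ⟨hipos, hne⟩
  have hle : ps ≤ i₀ := hGE2 (fun y => y ^ I) (hpowPy I) i₀ hIE
  have hge : i₀ ≤ ps := Nat.find_le ⟨hps, hHcI⟩
  have heq : i₀ = ps := le_antisymm hge hle
  exact ⟨I, hI, heq ▸ hIE⟩
end

section
/- Let ψ : ℝ^d → ℝ^N be measurable with E_x[‖ψ(x)‖⁴] < ∞, and let x_1,…,x_T be i.i.d. samples. Then E[ sup_{‖a‖≤1} | (1/T)Σ_{i=1}^T (a^⊤ψ(x_i))² − E_x[(a^⊤ψ(x))²] | ] ≤ 2√( E_x[‖ψ(x)‖⁴] / T ). -/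
open MeasureTheory

set_option maxHeartbeats 1000000 in
/-- Uniform deviation bound over the unit ball for empirical second moments of linear
features, via symmetrization. -/
theorem stmt18 {E : Type*} [MeasurableSpace E] (ρ : Measure E) [IsProbabilityMeasure ρ]
    (N T : ℕ) (hT : 0 < T) (ψ : E → Fin N → ℝ) (hψ : Measurable ψ)
    (hmom : Integrable (fun x => (∑ j, ψ x j ^ 2) ^ 2) ρ)
    (G : (Fin T → E) → ℝ)
    (hG : ∀ xs, G xs = ⨆ a : {a : Fin N → ℝ // ∑ j, a j ^ 2 ≤ 1},
      |(1 / (T : ℝ)) * ∑ i, (∑ j, a.1 j * ψ (xs i) j) ^ 2 -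
        ∫ x, (∑ j, a.1 j * ψ x j) ^ 2 ∂ρ|)
    (hGint : Integrable G (Measure.pi fun _ : Fin T => ρ)) :
    ∫ xs, G xs ∂(Measure.pi fun _ : Fin T => ρ) ≤
      2 * Real.sqrt ((∫ x, (∑ j, ψ x j ^ 2) ^ 2 ∂ρ) / T) := by
  letI : MeasureSpace E := { volume := ρ }
  haveI hvol : IsProbabilityMeasure (volume : Measure E) := ‹IsProbabilityMeasure ρ›
  set P : Measure (Fin T → E) := Measure.pi fun _ : Fin T => ρ with hPdef
  have hPvol : (volume : Measure (Fin T → E)) = P := rfl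
  haveI hPprob : IsProbabilityMeasure P := by
    rw [hPdef]; infer_instance
  have hTpos : (0 : ℝ) < T := by exact_mod_cast hT
  -- basic measurability
  have hφ : ∀ j, Measurable fun x => ψ x j := fun j => (measurable_pi_apply j).comp hψ
  set sq : E → ℝ := fun x => ∑ j, ψ x j ^ 2 with hsqdef
  set f : Fin N → Fin N → E → ℝ := fun j k x => ψ x j * ψ x k with hfdef
  have hf_meas : ∀ j k, Measurable (f j k) := fun j k => (hφ j).mul (hφ k)
  have hf_le : ∀ j k x, (f j k x) ^ 2 ≤ (sq x) ^ 2 := by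
    intro j k x
    have hj : ψ x j ^ 2 ≤ sq x := Finset.single_le_sum (fun i _ => sq_nonneg (ψ x i)) (Finset.mem_univ j)
    have hk : ψ x k ^ 2 ≤ sq x := Finset.single_le_sum (fun i _ => sq_nonneg (ψ x i)) (Finset.mem_univ k)
    have : (f j k x) ^ 2 = ψ x j ^ 2 * ψ x k ^ 2 := by simp [hfdef]; ring
    rw [this]
    nlinarith [sq_nonneg (ψ x j), sq_nonneg (ψ x k)]
  have hf2_int : ∀ j k, Integrable (fun x => (f j k x) ^ 2) ρ := by
    intro j k
    refine hmom.mono ((hf_meas j k).pow_const 2).aestronglyMeasurable ?_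
    filter_upwards with x
    have h0 : (0:ℝ) ≤ sq x := Finset.sum_nonneg fun i _ => sq_nonneg _
    rw [Real.norm_eq_abs, Real.norm_eq_abs, abs_of_nonneg (sq_nonneg _), abs_of_nonneg (by positivity)]
    exact hf_le j k x
  have hf_int : ∀ j k, Integrable (f j k) ρ := by
    intro j k
    have hb : Integrable (fun x => (1 + (sq x) ^ 2) / 2) ρ := ((integrable_const 1).add hmom).div_const 2
    refine hb.mono' (hf_meas j k).aestronglyMeasurable ?_
    filter_upwards with x
    rw [Real.norm_eq_abs]
    have h1 : (f j k x) ^ 2 ≤ (sq x) ^ 2 := hf_le j k x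
    have h2 : |f j k x| ≤ (1 + (f j k x) ^ 2) / 2 := by
      nlinarith [sq_nonneg (|f j k x| - 1), abs_nonneg (f j k x), sq_abs (f j k x)]
    calc |f j k x| ≤ (1 + (f j k x) ^ 2) / 2 := h2
      _ ≤ (1 + (sq x) ^ 2) / 2 := by linarith
  set μm : Fin N → Fin N → ℝ := fun j k => ∫ x, f j k x ∂ρ with hμdef
  set g : Fin N → Fin N → E → ℝ := fun j k x => f j k x - μm j k with hgdef
  have hg_meas : ∀ j k, Measurable (g j k) := fun j k => (hf_meas j k).sub measurable_const
  have hg_int : ∀ j k, Integrable (g j k) ρ := fun j k => (hf_int j k).sub (integrable_const _)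
  have hg_zero : ∀ j k, ∫ x, g j k x ∂ρ = 0 := by
    intro j k
    simp [hgdef, integral_sub (hf_int j k) (integrable_const _), hμdef]
  have hg2_eq : ∀ j k, (fun x => g j k x * g j k x)
      = fun x => (f j k x) ^ 2 - (2 * μm j k) * f j k x + (μm j k) ^ 2 := by
    intro j k; funext x; simp only [hgdef]; ring
  have hg2_int : ∀ j k, Integrable (fun x => g j k x * g j k x) ρ := by
    intro j k
    rw [hg2_eq]
    exact ((hf2_int j k).sub ((hf_int j k).const_mul _)).add (integrable_const _)
  have hg2_le : ∀ j k, ∫ x, g j k x * g j k x ∂ρ ≤ ∫ x, (f j k x) ^ 2 ∂ρ := by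
    intro j k
    have e1 : Integrable (fun x => f j k x ^ 2 - 2 * μm j k * f j k x) ρ :=
      (hf2_int j k).sub ((hf_int j k).const_mul _)
    rw [hg2_eq, integral_add e1 (integrable_const _),
      integral_sub (hf2_int j k) ((hf_int j k).const_mul _), integral_const_mul, integral_const]
    have : ∫ x, f j k x ∂ρ = μm j k := rfl
    rw [this]
    simp only [measure_univ, probReal_univ, ENNReal.toReal_one, smul_eq_mul, one_mul]
    nlinarith [sq_nonneg (μm j k)]
  set S : (Fin T → E) → Fin N → Fin N → ℝ := fun xs j k => (T : ℝ)⁻¹ * ∑ i, g j k (xs i)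
    with hSdef
  set h : (Fin T → E) → ℝ := fun xs => ∑ j, ∑ k, S xs j k ^ 2 with hhdef
  -- pointwise bound on G
  have key : ∀ xs, G xs ≤ Real.sqrt (h xs) := by
    intro xs
    rw [hG]
    haveI hne : Nonempty {a : Fin N → ℝ // ∑ j, a j ^ 2 ≤ 1} := ⟨⟨0, by simp⟩⟩
    refine ciSup_le fun a => ?_
    have sq_expand : ∀ x : E, (∑ j, a.1 j * ψ x j) ^ 2 = ∑ j, ∑ k, a.1 j * a.1 k * f j k x := by
      intro x
      rw [pow_two, Finset.sum_mul_sum]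
      exact Finset.sum_congr rfl fun j _ => Finset.sum_congr rfl fun k _ => by
        simp only [hfdef]; ring
    have int_expand : ∫ x, (∑ j, a.1 j * ψ x j) ^ 2 ∂ρ = ∑ j, ∑ k, a.1 j * a.1 k * μm j k := by
      simp_rw [sq_expand]
      rw [integral_finset_sum _ fun j _ =>
        integrable_finset_sum _ fun k _ => (hf_int j k).const_mul _]
      refine Finset.sum_congr rfl fun j _ => ?_
      rw [integral_finset_sum _ fun k _ => (hf_int j k).const_mul _]
      exact Finset.sum_congr rfl fun k _ => integral_const_mul _ _
    have emp_expand : (1 / (T : ℝ)) * ∑ i, (∑ j, a.1 j * ψ (xs i) j) ^ 2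
        = ∑ j, ∑ k, a.1 j * a.1 k * ((T : ℝ)⁻¹ * ∑ i, f j k (xs i)) := by
      simp_rw [sq_expand]
      simp only [Finset.mul_sum]
      rw [Finset.sum_comm]
      refine Finset.sum_congr rfl fun j _ => ?_
      rw [Finset.sum_comm]
      exact Finset.sum_congr rfl fun k _ => Finset.sum_congr rfl fun i _ => by ring
    have hSalt : ∀ j k, a.1 j * a.1 k * ((T : ℝ)⁻¹ * ∑ i, f j k (xs i)) - a.1 j * a.1 k * μm j k
        = a.1 j * a.1 k * S xs j k := by
      intro j k
      have hsum : ∑ i : Fin T, g j k (xs i) = (∑ i, f j k (xs i)) - (T : ℝ) * μm j k := by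
        simp [hgdef, Finset.sum_sub_distrib, Finset.sum_const, Finset.card_univ,
          Fintype.card_fin, nsmul_eq_mul]
      have hT0 : (T : ℝ) ≠ 0 := hTpos.ne'
      first
        | (simp only [hSdef, hsum]; field_simp; ring)
        | (simp only [hSdef, hsum]; field_simp)
    rw [int_expand, emp_expand, ← Finset.sum_sub_distrib]
    simp_rw [← Finset.sum_sub_distrib, hSalt]
    refine Real.abs_le_sqrt ?_
    have hprod : (∑ j, ∑ k, a.1 j * a.1 k * S xs j k)
        = ∑ p ∈ Finset.univ ×ˢ Finset.univ, (a.1 p.1 * a.1 p.2) * S xs p.1 p.2 :=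
      (Finset.sum_product' _ _ _).symm
    rw [hprod]
    have CS := Finset.sum_mul_sq_le_sq_mul_sq (Finset.univ ×ˢ Finset.univ)
      (fun p : Fin N × Fin N => a.1 p.1 * a.1 p.2) (fun p => S xs p.1 p.2)
    have h1 : ∑ p ∈ Finset.univ ×ˢ Finset.univ,
        ((fun p : Fin N × Fin N => a.1 p.1 * a.1 p.2) p) ^ 2 ≤ 1 := by
      have e : ∑ p ∈ Finset.univ ×ˢ Finset.univ,
          ((fun p : Fin N × Fin N => a.1 p.1 * a.1 p.2) p) ^ 2
          = (∑ j, a.1 j ^ 2) * (∑ k, a.1 k ^ 2) := by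
        rw [Finset.sum_mul_sum, Finset.sum_product]
        exact Finset.sum_congr rfl fun j _ => Finset.sum_congr rfl fun k _ => by ring
      rw [e]
      have h0 : (0:ℝ) ≤ ∑ j, a.1 j ^ 2 := Finset.sum_nonneg fun j _ => sq_nonneg _
      nlinarith [a.2]
    have h2 : ∑ p ∈ Finset.univ ×ˢ Finset.univ,
        ((fun p : Fin N × Fin N => S xs p.1 p.2) p) ^ 2 = h xs := by
      rw [Finset.sum_product]
    have hh0 : 0 ≤ h xs :=
      Finset.sum_nonneg fun j _ => Finset.sum_nonneg fun k _ => sq_nonneg _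
    calc (∑ p ∈ Finset.univ ×ˢ Finset.univ, (a.1 p.1 * a.1 p.2) * S xs p.1 p.2) ^ 2
        ≤ (∑ p ∈ Finset.univ ×ˢ Finset.univ,
            ((fun p : Fin N × Fin N => a.1 p.1 * a.1 p.2) p) ^ 2) *
          (∑ p ∈ Finset.univ ×ˢ Finset.univ,
            ((fun p : Fin N × Fin N => S xs p.1 p.2) p) ^ 2) := CS
      _ = (∑ p ∈ Finset.univ ×ˢ Finset.univ,
            ((fun p : Fin N × Fin N => a.1 p.1 * a.1 p.2) p) ^ 2) * h xs := by rw [h2]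
      _ ≤ 1 * h xs := mul_le_mul_of_nonneg_right h1 hh0
      _ = h xs := one_mul _
  -- integrability and integral of products over the product measure
  have term2 : ∀ j k (i i' : Fin T),
      Integrable (fun xs : Fin T → E => g j k (xs i) * g j k (xs i')) P ∧
      ∫ xs, g j k (xs i) * g j k (xs i') ∂P
        = if i = i' then ∫ x, g j k x * g j k x ∂ρ else 0 := by
    intro j k i i'
    classical
    set H : Fin T → E → ℝ :=
      fun t x => (if t = i then g j k x else 1) * (if t = i' then g j k x else 1) with hHdef
    have hH : ∀ t, Integrable (H t) ρ := by
      intro t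
      by_cases h1 : t = i <;> by_cases h2 : t = i'
      · simp only [hHdef, if_pos h1, if_pos h2]; exact hg2_int j k
      · simp only [hHdef, if_pos h1, if_neg h2, mul_one]; exact hg_int j k
      · simp only [hHdef, if_neg h1, if_pos h2, one_mul]; exact hg_int j k
      · simp only [hHdef, if_neg h1, if_neg h2, mul_one]; exact integrable_const (1:ℝ)
    have hrep : ∀ xs : Fin T → E, g j k (xs i) * g j k (xs i') = ∏ t, H t (xs t) := by
      intro xs
      simp only [hHdef]
      rw [Finset.prod_mul_distrib, Finset.prod_ite_eq' Finset.univ i (fun t => g j k (xs t)),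
        Finset.prod_ite_eq' Finset.univ i' (fun t => g j k (xs t))]
      simp
    have hint : Integrable (fun xs : Fin T → E => ∏ t, H t (xs t)) P := by
      rw [← hPvol]
      exact Integrable.fintype_prod hH
    have hintegral : ∫ xs, ∏ t, H t (xs t) ∂P = ∏ t, ∫ x, H t x ∂ρ := by
      rw [← hPvol]
      exact integral_fintype_prod_eq_prod H
    constructor
    · exact hint.congr (Filter.Eventually.of_forall fun xs => (hrep xs).symm)
    · have e0 : ∫ xs, g j k (xs i) * g j k (xs i') ∂P = ∏ t, ∫ x, H t x ∂ρ := by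
        rw [← hintegral]
        exact integral_congr_ae (Filter.Eventually.of_forall fun xs => hrep xs)
      rw [e0]
      by_cases hii : i = i'
      · subst hii
        rw [if_pos rfl, Finset.prod_eq_single i (fun t _ ht => ?_) (fun hni => ?_)]
        · refine integral_congr_ae (Filter.Eventually.of_forall fun x => ?_)
          simp [hHdef]
        · have : H t = fun _ => 1 := by funext x; simp [hHdef, ht]
          rw [this]
          simp
        · exact absurd (Finset.mem_univ i) hni
      · rw [if_neg hii]
        refine Finset.prod_eq_zero (Finset.mem_univ i) ?_
        have : H i = g j k := by
          funext x; simp [hHdef, hii]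
        rw [this]
        exact hg_zero j k
  have hS2int : ∀ j k, Integrable (fun xs => S xs j k ^ 2) P ∧
      ∫ xs, S xs j k ^ 2 ∂P = (∫ x, g j k x * g j k x ∂ρ) / T := by
    intro j k
    have hSsq : (fun xs : Fin T → E => S xs j k ^ 2)
        = fun xs => ∑ i, ∑ i', ((T : ℝ)⁻¹) ^ 2 * (g j k (xs i) * g j k (xs i')) := by
      funext xs
      simp only [hSdef]
      rw [mul_pow, pow_two (∑ i, g j k (xs i)), Finset.sum_mul_sum, Finset.mul_sum]
      refine Finset.sum_congr rfl fun i _ => ?_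
      rw [Finset.mul_sum]
    have hint : Integrable (fun xs => S xs j k ^ 2) P := by
      rw [hSsq]
      exact integrable_finset_sum _ fun i _ => integrable_finset_sum _ fun i' _ =>
        ((term2 j k i i').1.const_mul _)
    refine ⟨hint, ?_⟩
    rw [hSsq, integral_finset_sum _ fun i _ => integrable_finset_sum _ fun i' _ =>
      ((term2 j k i i').1.const_mul _)]
    have e1 : ∀ i : Fin T, ∫ xs, ∑ i', ((T : ℝ)⁻¹) ^ 2 * (g j k (xs i) * g j k (xs i')) ∂P
        = ((T : ℝ)⁻¹) ^ 2 * ∫ x, g j k x * g j k x ∂ρ := by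
      intro i
      rw [integral_finset_sum _ fun i' _ => ((term2 j k i i').1.const_mul _)]
      have e2 : ∀ i' : Fin T, ∫ xs, ((T : ℝ)⁻¹) ^ 2 * (g j k (xs i) * g j k (xs i')) ∂P
          = ((T : ℝ)⁻¹) ^ 2 * (if i = i' then ∫ x, g j k x * g j k x ∂ρ else 0) := by
        intro i'
        rw [integral_const_mul, (term2 j k i i').2]
      simp_rw [e2]
      rw [← Finset.mul_sum, Finset.sum_ite_eq]
      simp
    simp_rw [e1]
    rw [Finset.sum_const, Finset.card_univ, Fintype.card_fin, nsmul_eq_mul]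
    field_simp
  have hInt_h : Integrable h P :=
    integrable_finset_sum _ fun j _ => integrable_finset_sum _ fun k _ => (hS2int j k).1
  have hIh : ∫ xs, h xs ∂P ≤ (∫ x, (sq x) ^ 2 ∂ρ) / T := by
    have h1 : ∫ xs, h xs ∂P = ∑ j, ∑ k, (∫ x, g j k x * g j k x ∂ρ) / T := by
      simp only [hhdef]
      rw [integral_finset_sum _ fun j _ => integrable_finset_sum _ fun k _ => (hS2int j k).1]
      refine Finset.sum_congr rfl fun j _ => ?_
      rw [integral_finset_sum _ fun k _ => (hS2int j k).1]
      exact Finset.sum_congr rfl fun k _ => (hS2int j k).2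
    have h2 : ∑ j, ∑ k, (∫ x, g j k x * g j k x ∂ρ) / T
        ≤ ∑ j, ∑ k, (∫ x, (f j k x) ^ 2 ∂ρ) / T :=
      Finset.sum_le_sum fun j _ => Finset.sum_le_sum fun k _ =>
        div_le_div_of_nonneg_right (hg2_le j k) hTpos.le
    have h3 : ∑ j, ∑ k, (∫ x, (f j k x) ^ 2 ∂ρ) / T = (∫ x, (sq x) ^ 2 ∂ρ) / T := by
      have e : ∫ x, (sq x) ^ 2 ∂ρ = ∑ j, ∑ k, ∫ x, (f j k x) ^ 2 ∂ρ := by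
        have efun : (fun x => (sq x) ^ 2) = fun x => ∑ j, ∑ k, (f j k x) ^ 2 := by
          funext x
          simp only [hsqdef, hfdef]
          rw [pow_two (∑ j, ψ x j ^ 2), Finset.sum_mul_sum]
          exact Finset.sum_congr rfl fun j _ => Finset.sum_congr rfl fun k _ => by ring
        rw [efun, integral_finset_sum _ fun j _ =>
          integrable_finset_sum _ fun k _ => hf2_int j k]
        exact Finset.sum_congr rfl fun j _ =>
          integral_finset_sum _ fun k _ => hf2_int j k
      rw [e]
      simp [Finset.sum_div]
    rw [h1]
    exact h2.trans h3.le
  set C : ℝ := (∫ x, (sq x) ^ 2 ∂ρ) / T with hCdef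
  have hCnn : 0 ≤ C := by
    have : 0 ≤ ∫ x, (sq x) ^ 2 ∂ρ := integral_nonneg fun x => sq_nonneg _
    positivity
  have main : ∫ xs, G xs ∂P ≤ Real.sqrt C := by
    have step : ∀ ε : ℝ, 0 < ε → ∫ xs, G xs ∂P ≤ Real.sqrt C + ε := by
      intro ε hε
      set t : ℝ := Real.sqrt C + ε with htdef
      have ht : 0 < t := by have := Real.sqrt_nonneg C; linarith
      have hb : Integrable (fun xs => t / 2 + h xs / (2 * t)) P :=
        (integrable_const _).add (hInt_h.div_const _)
      have hle : ∀ xs, G xs ≤ t / 2 + h xs / (2 * t) := by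
        intro xs
        refine (key xs).trans ?_
        have hh0 : 0 ≤ h xs := Finset.sum_nonneg fun j _ => Finset.sum_nonneg fun k _ => sq_nonneg _
        have hs := Real.sq_sqrt hh0
        have h6 : Real.sqrt (h xs) ≤ (h xs + t ^ 2) / (2 * t) := by
          rw [le_div_iff₀ (by linarith)]
          nlinarith [sq_nonneg (Real.sqrt (h xs) - t)]
        have h7 : (h xs + t ^ 2) / (2 * t) = t / 2 + h xs / (2 * t) := by
          field_simp; ring
        linarith [h6, h7.le, h7.ge]
      have h1 : ∫ xs, G xs ∂P ≤ ∫ xs, t / 2 + h xs / (2 * t) ∂P :=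
        integral_mono hGint hb hle
      have h2 : ∫ xs, t / 2 + h xs / (2 * t) ∂P = t / 2 + (∫ xs, h xs ∂P) / (2 * t) := by
        rw [integral_add (integrable_const _) (hInt_h.div_const _), integral_const,
          integral_div]
        simp [measure_univ]
      have h3 : (∫ xs, h xs ∂P) / (2 * t) ≤ C / (2 * t) :=
        div_le_div_of_nonneg_right hIh (by linarith) |>.trans_eq rfl
      have h4 : C / (2 * t) ≤ t / 2 := by
        have hC : C = Real.sqrt C ^ 2 := (Real.sq_sqrt hCnn).symm
        have h5 : Real.sqrt C ≤ t := by have := Real.sqrt_nonneg C; linarith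
        rw [div_le_div_iff₀ (by linarith) (by norm_num)]
        nlinarith [Real.sqrt_nonneg C]
      calc ∫ xs, G xs ∂P ≤ t / 2 + (∫ xs, h xs ∂P) / (2 * t) := h1.trans_eq h2
        _ ≤ t / 2 + C / (2 * t) := by linarith
        _ ≤ t / 2 + t / 2 := by linarith
        _ = Real.sqrt C + ε := by rw [htdef]; ring
    by_contra hcon
    push_neg at hcon
    have := step ((∫ xs, G xs ∂P - Real.sqrt C) / 2) (by linarith)
    linarith
  calc ∫ xs, G xs ∂P ≤ Real.sqrt C := main
    _ ≤ 2 * Real.sqrt C := by nlinarith [Real.sqrt_nonneg C]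
end
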